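/- arXiv:2306.07418 — 2 statements merged into one kernel-verified Lean document; each statement's English description precedes it below -/
import Mathlib

section
/- Let M be the subsystem measurement on C^E ⊗ C^D, let Θ(M)(ρ) = Σ_{j∈Z_D} M_j(ρ) ⊗ |j⟩⟨j| be an implementation of M with completely positive maps M_j whose sum is trace preserving, and let Δ = Θ(M) − M. Then for every density matrix σ on C^E and every j ∈ Z_D, with σ_j = σ ⊗ |j⟩⟨j|, the diamond norm satisfies ‖Δ‖_◇ ≥ 1 − tr M_j(σ_j) + ‖M_j(σ_j) − σ_j‖₁. -/
open scoped Kronecker ComplexOrder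
open Matrix

/-- The positive semidefinite square root of a positive semidefinite matrix
(junk value `0` on matrices that are not positive semidefinite). -/
noncomputable def psdSqrt {n : Type*} [Fintype n] [DecidableEq n] (A : Matrix n n ℂ) :
    Matrix n n ℂ :=
  letI := Classical.propDecidable A.PosSemidef
  if h : A.PosSemidef then (h.1.eigenvectorUnitary : Matrix n n ℂ) *
    diagonal ((↑) ∘ (√·) ∘ h.1.eigenvalues) * (star h.1.eigenvectorUnitary : Matrix n n ℂ) else 0

/-- The trace norm `‖A‖₁ = tr √(A Aᴴ)`. -/
noncomputable def traceNorm {n : Type*} [Fintype n] [DecidableEq n] (A : Matrix n n ℂ) : ℝ :=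
  (psdSqrt (A * Aᴴ)).trace.re

/-- The fidelity `F(A,B) = ‖√A √B‖₁²` between positive semidefinite matrices. -/
noncomputable def fidelity {n : Type*} [Fintype n] [DecidableEq n] (A B : Matrix n n ℂ) : ℝ :=
  traceNorm (psdSqrt A * psdSqrt B) ^ 2

/-- The Choi matrix `J(Φ) = (1/n) Σ_{j,k} E_{jk} ⊗ Φ(E_{jk})` of a map on matrices. -/
noncomputable def choi {n m : Type*} [Fintype n] [DecidableEq n] [Fintype m]
    (Φ : Matrix n n ℂ → Matrix m m ℂ) : Matrix (n × m) (n × m) ℂ :=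
  (Fintype.card n : ℂ)⁻¹ • ∑ j : n, ∑ k : n,
    (Matrix.single j k (1 : ℂ)) ⊗ₖ Φ (Matrix.single j k (1 : ℂ))

/-- The extension `(id_F ⊗ Φ)` of a map on matrices by an ancilla of dimension `F`. -/
def tensorExt (F : ℕ) {n m : Type*} (Φ : Matrix n n ℂ → Matrix m m ℂ)
    (ρ : Matrix (Fin F × n) (Fin F × n) ℂ) : Matrix (Fin F × m) (Fin F × m) ℂ :=
  Matrix.of fun p q => Φ (Matrix.of fun i j => ρ (p.1, i) (q.1, j)) p.2 q.2

/-- The diamond norm `‖Φ‖◇`: the supremum of `‖(id_F ⊗ Φ)(ρ)‖₁` over all finite ancilla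
dimensions `F` and density matrices `ρ`. -/
noncomputable def diamondNorm {n m : Type*} [Fintype n] [DecidableEq n] [Fintype m]
    [DecidableEq m] (Φ : Matrix n n ℂ → Matrix m m ℂ) : ℝ :=
  sSup { x : ℝ | ∃ (F : ℕ) (ρ : Matrix (Fin F × n) (Fin F × n) ℂ),
    ρ.PosSemidef ∧ ρ.trace = 1 ∧ x = traceNorm (tensorExt F Φ ρ) }

/-- `|j⟩⟨j|` as a `D × D` matrix over the cyclic outcome set `Z_D`. -/
def ketbra {D : ℕ} [NeZero D] (j : ZMod D) : Matrix (ZMod D) (ZMod D) ℂ :=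
  Matrix.single j j 1

/-- The projector `π_j = I_E ⊗ |j⟩⟨j|`. -/
def measProj (E : ℕ) {D : ℕ} [NeZero D] (j : ZMod D) :
    Matrix (Fin E × ZMod D) (Fin E × ZMod D) ℂ :=
  (1 : Matrix (Fin E) (Fin E) ℂ) ⊗ₖ ketbra j

/-- The subsystem measurement `M(ρ) = Σ_j π_j ρ π_j ⊗ |j⟩⟨j|`. -/
noncomputable def subsysMeas (E D : ℕ) [NeZero D]
    (ρ : Matrix (Fin E × ZMod D) (Fin E × ZMod D) ℂ) :
    Matrix ((Fin E × ZMod D) × ZMod D) ((Fin E × ZMod D) × ZMod D) ℂ :=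
  ∑ j : ZMod D, (measProj E j * ρ * measProj E j) ⊗ₖ ketbra j

/-- The block `(I_E ⊗ ⟨x|) ρ (I_E ⊗ |y⟩)` of a matrix on `C^E ⊗ C^D`. -/
def blockAt {E D : ℕ} [NeZero D] (ρ : Matrix (Fin E × ZMod D) (Fin E × ZMod D) ℂ)
    (x y : ZMod D) : Matrix (Fin E) (Fin E) ℂ :=
  Matrix.of fun e f => ρ (e, x) (f, y)

/-- `col(I_E)`: the column-stacking vectorization of the identity matrix, as a vector indexed
compatibly with the Choi matrix `choi` of a map on `E × E` matrices. -/
def colI (E : ℕ) : Fin E × Fin E → ℂ := fun p => if p.1 = p.2 then 1 else 0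

/-- `T` is a (normalized) stochastic channel with parameter `λ ∈ [0,1]`: it has a Kraus
decomposition `T(ρ) = Σ_k B_k ρ B_kᴴ` with pairwise Hilbert–Schmidt orthogonal Kraus
operators, `Σ_k B_kᴴ B_k = 1` (trace preservation), and `B_0 = √λ • I`. -/
def IsStochasticKraus {n : Type*} [Fintype n] [DecidableEq n] (lam : ℝ)
    (T : Matrix n n ℂ → Matrix n n ℂ) : Prop :=
  ∃ (K : ℕ) (B : Fin (K + 1) → Matrix n n ℂ),
    (∀ ρ, T ρ = ∑ k, B k * ρ * (B k)ᴴ) ∧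
    (∑ k, (B k)ᴴ * B k = 1) ∧
    (∀ k l, k ≠ l → ((B k)ᴴ * B l).trace = 0) ∧
    B 0 = (Real.sqrt lam : ℂ) • 1


section Helpers
set_option linter.unusedSectionVars false
variable {n m : Type*} [Fintype n] [DecidableEq n] [Fintype m] [DecidableEq m]

open scoped MatrixOrder in
lemma psdSqrt_eq_cfcSqrt {A : Matrix n n ℂ} (hA : A.PosSemidef) : psdSqrt A = CFC.sqrt A := by
  rw [CFC.sqrt_eq_real_sqrt A hA.nonneg, cfcₙ_eq_cfc, hA.1.cfc_eq, IsHermitian.cfc, psdSqrt]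
  simp only [dif_pos hA]
  rfl

open scoped MatrixOrder in
lemma psdSqrt_eq {A S : Matrix n n ℂ} (hS : S.PosSemidef) (h : S ^ 2 = A) :
    psdSqrt A = S := by
  have hA : A.PosSemidef := h ▸ hS.pow 2
  rw [psdSqrt_eq_cfcSqrt hA]
  exact CFC.sqrt_unique (by rw [← pow_two, h]) hS.nonneg

open scoped MatrixOrder in
lemma psdSqrt_posSemidef {A : Matrix n n ℂ} (hA : A.PosSemidef) :
    (psdSqrt A).PosSemidef := by
  rw [psdSqrt_eq_cfcSqrt hA]; exact Matrix.nonneg_iff_posSemidef.mp (CFC.sqrt_nonneg A)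

open scoped MatrixOrder in
lemma psdSqrt_sq {A : Matrix n n ℂ} (hA : A.PosSemidef) : psdSqrt A ^ 2 = A := by
  rw [psdSqrt_eq_cfcSqrt hA]; exact CFC.sq_sqrt A hA.nonneg

lemma traceNorm_of_posSemidef {A : Matrix n n ℂ} (hA : A.PosSemidef) :
    traceNorm A = A.trace.re := by
  rw [traceNorm, hA.1.eq, ← pow_two, psdSqrt_eq hA rfl]

lemma traceNorm_submatrix_equiv (e : m ≃ n) (A : Matrix n n ℂ) :
    traceNorm (A.submatrix e e) = traceNorm A := by
  have h1 : A.submatrix e e * (A.submatrix e e)ᴴ = (A * Aᴴ).submatrix e e := by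
    rw [conjTranspose_submatrix, submatrix_mul_equiv]
  have hAA : (A * Aᴴ).PosSemidef := posSemidef_self_mul_conjTranspose A
  have h2 : psdSqrt ((A * Aᴴ).submatrix e e) = (psdSqrt (A * Aᴴ)).submatrix e e := by
    apply psdSqrt_eq ((psdSqrt_posSemidef hAA).submatrix e)
    rw [pow_two, submatrix_mul_equiv, ← pow_two, psdSqrt_sq hAA]
  rw [traceNorm, h1, h2, traceNorm]
  congr 1
  rw [trace, trace]
  exact e.sum_comp fun i => (psdSqrt (A * Aᴴ)) i i

lemma posSemidef_diag_entry {M : Matrix n n ℂ} (hM : M.PosSemidef) (i : n) :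
    0 ≤ M i i := by
  exact hM.diag_nonneg

lemma traceNorm_sub_le {P Q : Matrix n n ℂ} (hP : P.PosSemidef) (hQ : Q.PosSemidef) :
    traceNorm (P - Q) ≤ P.trace.re + Q.trace.re := by
  have hX : (P - Q).IsHermitian := hP.1.sub hQ.1
  set U : Matrix n n ℂ := (hX.eigenvectorUnitary : Matrix n n ℂ) with hUdef
  have hU : U ∈ Matrix.unitaryGroup n ℂ := hX.eigenvectorUnitary.2
  have hU1 : U * Uᴴ = 1 := by
    simpa [Matrix.star_eq_conjTranspose] using (Matrix.mem_unitaryGroup_iff).mp hU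
  have hU2 : Uᴴ * U = 1 := by
    simpa [Matrix.star_eq_conjTranspose] using (Matrix.mem_unitaryGroup_iff').mp hU
  set d := hX.eigenvalues with hddef
  have hspec : P - Q = U * diagonal (Complex.ofReal ∘ d) * Uᴴ := by
    simpa [Matrix.star_eq_conjTranspose] using hX.spectral_theorem
  have hmul : ∀ f g : n → ℂ, (U * diagonal f * Uᴴ) * (U * diagonal g * Uᴴ)
      = U * diagonal (fun i => f i * g i) * Uᴴ := by
    intro f g
    calc (U * diagonal f * Uᴴ) * (U * diagonal g * Uᴴ)
        = U * diagonal f * ((Uᴴ * U) * (diagonal g * Uᴴ)) := by simp only [Matrix.mul_assoc]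
      _ = U * diagonal f * ((1 : Matrix n n ℂ) * (diagonal g * Uᴴ)) := by rw [hU2]
      _ = U * (diagonal f * diagonal g) * Uᴴ := by simp only [Matrix.one_mul, Matrix.mul_assoc]
      _ = U * diagonal (fun i => f i * g i) * Uᴴ := by rw [diagonal_mul_diagonal]
  set S : Matrix n n ℂ := U * diagonal (fun i => Complex.ofReal |d i|) * Uᴴ with hSdef
  have hSpsd : S.PosSemidef := by
    have : (diagonal (fun i => Complex.ofReal |d i|)).PosSemidef :=
      Matrix.PosSemidef.diagonal fun i => Complex.zero_le_real.mpr (abs_nonneg _)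
    simpa using this.mul_mul_conjTranspose_same U
  have hS2 : S ^ 2 = (P - Q) * (P - Q)ᴴ := by
    rw [hX.eq, ← pow_two, hspec, pow_two, pow_two, hSdef, hmul, hmul]
    congr 2
    ext i
    simp [← Complex.ofReal_mul, abs_mul_self]
  have hsqrt : psdSqrt ((P - Q) * (P - Q)ᴴ) = S := psdSqrt_eq hSpsd hS2
  have htr : traceNorm (P - Q) = ∑ i, |d i| := by
    rw [traceNorm, hsqrt, hSdef, Matrix.trace_mul_cycle, hU2, Matrix.one_mul, trace_diagonal]
    simp
  rw [htr]
  have hP' : (Uᴴ * P * U).PosSemidef := hP.conjTranspose_mul_mul_same U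
  have hQ' : (Uᴴ * Q * U).PosSemidef := hQ.conjTranspose_mul_mul_same U
  have hdiag : Uᴴ * (P - Q) * U = diagonal (Complex.ofReal ∘ d) := by
    rw [hspec]
    calc Uᴴ * (U * diagonal (Complex.ofReal ∘ d) * Uᴴ) * U
        = (Uᴴ * U) * (diagonal (Complex.ofReal ∘ d) * (Uᴴ * U)) := by
          simp only [Matrix.mul_assoc]
      _ = diagonal (Complex.ofReal ∘ d) := by rw [hU2, Matrix.one_mul, Matrix.mul_one]
  have hentry : ∀ i, (d i : ℂ) = (Uᴴ * P * U) i i - (Uᴴ * Q * U) i i := by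
    intro i
    have h := congrFun (congrFun hdiag i) i
    rw [diagonal_apply_eq] at h
    simp only [Function.comp_apply] at h
    rw [← h]
    simp [Matrix.sub_mul, Matrix.mul_sub, Matrix.sub_apply]
  have key : ∀ i, |d i| ≤ ((Uᴴ * P * U) i i).re + ((Uᴴ * Q * U) i i).re := by
    intro i
    have h1 := posSemidef_diag_entry hP' i
    have h2 := posSemidef_diag_entry hQ' i
    rw [Complex.nonneg_iff] at h1 h2
    have hd : d i = ((Uᴴ * P * U) i i).re - ((Uᴴ * Q * U) i i).re := by
      have := congrArg Complex.re (hentry i)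
      simpa using this
    rw [hd, abs_sub_le_iff]
    constructor <;> linarith [h1.1, h2.1]
  calc ∑ i, |d i| ≤ ∑ i, (((Uᴴ * P * U) i i).re + ((Uᴴ * Q * U) i i).re) :=
        Finset.sum_le_sum fun i _ => key i
    _ = (Uᴴ * P * U).trace.re + (Uᴴ * Q * U).trace.re := by
        rw [Finset.sum_add_distrib]
        simp [Matrix.trace, Matrix.diag, Complex.re_sum]
    _ = P.trace.re + Q.trace.re := by
        rw [Matrix.trace_mul_cycle, hU1, Matrix.one_mul,
          Matrix.trace_mul_cycle (Uᴴ) Q U, hU1, Matrix.one_mul]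

end Helpers

section KB
set_option linter.unusedSectionVars false
variable {n m l p : Type*} [Fintype n] [DecidableEq n] [Fintype m] [DecidableEq m]
  [Fintype l] [DecidableEq l] [Fintype p] [DecidableEq p] {D : ℕ} [NeZero D]

lemma kron_conjTranspose (A : Matrix l m ℂ) (B : Matrix n p ℂ) :
    (A ⊗ₖ B)ᴴ = Aᴴ ⊗ₖ Bᴴ := by
  ext ⟨a, b⟩ ⟨c, d⟩
  simp [conjTranspose_apply, kroneckerMap_apply]

lemma ketbra_conjTranspose (k : ZMod D) : (ketbra k)ᴴ = ketbra k := by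
  ext x y
  simp only [ketbra, conjTranspose_apply, single, of_apply]
  by_cases h : k = x <;> by_cases h' : k = y <;> simp [h, h', and_comm]

lemma ketbra_mul (k l' : ZMod D) :
    ketbra k * ketbra l' = if k = l' then ketbra k else 0 := by
  by_cases h : k = l'
  · subst h; simp [ketbra, Matrix.single_mul_single_same]
  · simp [ketbra, h]

lemma ketbra_trace (k : ZMod D) : (ketbra k).trace = 1 := by
  simp [ketbra, Matrix.trace, Matrix.diag, single, of_apply, Finset.sum_ite_eq]

lemma ketbra_posSemidef (k : ZMod D) : (ketbra k).PosSemidef := by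
  have := posSemidef_conjTranspose_mul_self (ketbra k)
  rwa [ketbra_conjTranspose, ketbra_mul, if_pos rfl] at this

lemma kron_ketbra_posSemidef {A : Matrix n n ℂ} (hA : A.PosSemidef) (k : ZMod D) :
    (A ⊗ₖ ketbra k).PosSemidef := by
  obtain ⟨B, hB⟩ : ∃ B : Matrix n n ℂ, A = Bᴴ * B :=
    ⟨psdSqrt A, by rw [(psdSqrt_posSemidef hA).1.eq, ← pow_two, psdSqrt_sq hA]⟩
  have := posSemidef_conjTranspose_mul_self (B ⊗ₖ ketbra k)
  rwa [kron_conjTranspose, ketbra_conjTranspose, ← Matrix.mul_kronecker_mul, ← hB,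
    ketbra_mul, if_pos rfl] at this

lemma sum_ketbra_eq_one : ∑ k : ZMod D, ketbra k = (1 : Matrix (ZMod D) (ZMod D) ℂ) := by
  ext x y
  simp only [Matrix.sum_apply, ketbra, single, of_apply, Matrix.one_apply]
  by_cases h : x = y
  · subst h; simp
  · rw [if_neg h]
    apply Finset.sum_eq_zero
    intro z _
    rw [if_neg]
    rintro ⟨rfl, rfl⟩
    exact h rfl

end KB

section Block
set_option linter.unusedSectionVars false
variable {n : Type*} [Fintype n] [DecidableEq n] {D : ℕ} [NeZero D]

lemma posSemidef_sum {ι : Type*} (s : Finset ι) (f : ι → Matrix n n ℂ)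
    (h : ∀ i ∈ s, (f i).PosSemidef) : (∑ i ∈ s, f i).PosSemidef := by
  classical
  induction s using Finset.induction_on with
  | empty => simpa using Matrix.PosSemidef.zero
  | insert _ _ hx ih =>
      rw [Finset.sum_insert hx]
      exact (h _ (Finset.mem_insert_self _ _)).add
        (ih fun i hi => h i (Finset.mem_insert_of_mem hi))

lemma kron_ketbra_sum_mul (B C : ZMod D → Matrix n n ℂ) :
    (∑ k, B k ⊗ₖ ketbra k) * (∑ k, C k ⊗ₖ ketbra k) = ∑ k, (B k * C k) ⊗ₖ ketbra k := by
  rw [Finset.sum_mul_sum]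
  refine Finset.sum_congr rfl fun k _ => ?_
  rw [Finset.sum_eq_single k]
  · rw [← Matrix.mul_kronecker_mul, ketbra_mul, if_pos rfl]
  · intro l _ hl
    rw [← Matrix.mul_kronecker_mul, ketbra_mul, if_neg (Ne.symm hl), Matrix.kronecker_zero]
  · intro h; exact absurd (Finset.mem_univ k) h

lemma kron_ketbra_sum_conjTranspose (A : ZMod D → Matrix n n ℂ) :
    (∑ k, A k ⊗ₖ ketbra k)ᴴ = ∑ k, (A k)ᴴ ⊗ₖ ketbra k := by
  rw [Matrix.conjTranspose_sum]
  exact Finset.sum_congr rfl fun k _ => by rw [kron_conjTranspose, ketbra_conjTranspose]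

lemma traceNorm_block_sum (A : ZMod D → Matrix n n ℂ) :
    traceNorm (∑ k, A k ⊗ₖ ketbra k) = ∑ k, traceNorm (A k) := by
  have hAA : ∀ k, (A k * (A k)ᴴ).PosSemidef := fun k =>
    posSemidef_self_mul_conjTranspose (A k)
  set S : Matrix (n × ZMod D) (n × ZMod D) ℂ :=
    ∑ k, psdSqrt (A k * (A k)ᴴ) ⊗ₖ ketbra k with hSdef
  have hSpsd : S.PosSemidef :=
    posSemidef_sum _ _ fun k _ => kron_ketbra_posSemidef (psdSqrt_posSemidef (hAA k)) k
  have hS2 : S ^ 2 = (∑ k, A k ⊗ₖ ketbra k) * (∑ k, A k ⊗ₖ ketbra k)ᴴ := by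
    rw [kron_ketbra_sum_conjTranspose, kron_ketbra_sum_mul, pow_two, hSdef,
      kron_ketbra_sum_mul]
    refine Finset.sum_congr rfl fun k _ => ?_
    rw [← pow_two, psdSqrt_sq (hAA k)]
  rw [traceNorm, psdSqrt_eq hSpsd hS2, hSdef, Matrix.trace_sum]
  rw [Complex.re_sum]
  refine Finset.sum_congr rfl fun k _ => ?_
  rw [Matrix.trace_kronecker, ketbra_trace, mul_one, traceNorm]
end Block

section Tensor
set_option linter.unusedSectionVars false
variable {n m : Type*} [Fintype n] [DecidableEq n] [Fintype m] [DecidableEq m]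

def idKron (F : ℕ) (R : Matrix m n ℂ) : Matrix (Fin F × m) (Fin F × n) ℂ :=
  Matrix.of fun p q => if p.1 = q.1 then R p.2 q.2 else 0

lemma tensorExt_kraus {F : ℕ} {ι : Type*} [Fintype ι] (R : ι → Matrix m n ℂ)
    (Φ : Matrix n n ℂ → Matrix m m ℂ) (hΦ : ∀ ρ, Φ ρ = ∑ i, R i * ρ * (R i)ᴴ)
    (ρ : Matrix (Fin F × n) (Fin F × n) ℂ) :
    tensorExt F Φ ρ = ∑ i, idKron F (R i) * ρ * (idKron F (R i))ᴴ := by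
  ext ⟨f, a⟩ ⟨g, b⟩
  rw [tensorExt, of_apply, hΦ, Matrix.sum_apply, Matrix.sum_apply]
  refine Finset.sum_congr rfl fun i _ => ?_
  simp only [Matrix.mul_apply, Matrix.conjTranspose_apply, idKron, Matrix.of_apply,
    Fintype.sum_prod_type, ite_mul, mul_ite, zero_mul, mul_zero, star_zero,
    apply_ite (star : ℂ → ℂ), Finset.sum_ite_irrel, Finset.sum_const_zero, Finset.sum_ite_eq, Finset.sum_ite_eq', Finset.mem_univ, if_true]

end Tensor

section Specific
set_option linter.unusedSectionVars false
variable {n : Type*} [Fintype n] [DecidableEq n] {D : ℕ} [NeZero D]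

/-- Kraus operator embedding `L ↦ L ⊗ |k⟩` as a rectangular matrix. -/
def krausKet (L : Matrix n n ℂ) (k : ZMod D) : Matrix (n × ZMod D) n ℂ :=
  Matrix.of fun p b => if p.2 = k then L p.1 b else 0

lemma kron_ketbra_kraus (L : Matrix n n ℂ) (ρ : Matrix n n ℂ) (k : ZMod D) :
    (L * ρ * Lᴴ) ⊗ₖ ketbra k = krausKet L k * ρ * (krausKet L k)ᴴ := by
  ext ⟨a, x⟩ ⟨b, y⟩
  simp only [kroneckerMap_apply, Matrix.mul_apply, Matrix.conjTranspose_apply, of_apply,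
    ketbra, single, krausKet, ite_mul, mul_ite, zero_mul, mul_zero, star_zero,
    apply_ite (star : ℂ → ℂ), Finset.sum_ite_irrel, Finset.sum_const_zero,
    Finset.sum_ite_eq, Finset.sum_ite_eq', Finset.mem_univ, if_true]
  by_cases hx : x = k <;> by_cases hy : y = k
  · simp [hx, hy, Finset.mul_sum, Finset.sum_mul, mul_comm, mul_assoc, mul_left_comm]
  · simp [hx, hy, show ¬ k = y from fun h => hy h.symm]
  · simp [hx, hy, show ¬ k = x from fun h => hx h.symm]
  · simp [hx, hy, show ¬ k = x from fun h => hx h.symm]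
end Specific

section Specific2
set_option linter.unusedSectionVars false
variable {n : Type*} [Fintype n] [DecidableEq n] {D : ℕ} [NeZero D]

lemma sub_kron (A B : Matrix n n ℂ) (C : Matrix (ZMod D) (ZMod D) ℂ) :
    (A - B) ⊗ₖ C = A ⊗ₖ C - B ⊗ₖ C := by
  ext ⟨a, x⟩ ⟨b, y⟩
  simp [kroneckerMap_apply, Matrix.sub_apply, sub_mul]

lemma trace_tensorExt {F : ℕ} {m : Type*} [Fintype m]
    (Φ : Matrix n n ℂ → Matrix m m ℂ)
    (hΦ : ∀ X, (Φ X).trace = X.trace) (ρ : Matrix (Fin F × n) (Fin F × n) ℂ) :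
    (tensorExt F Φ ρ).trace = ρ.trace := by
  have key : ∀ f : Fin F, ∑ a : m, Φ (Matrix.of fun i j => ρ (f, i) (f, j)) a a
      = ∑ c : n, ρ (f, c) (f, c) := by
    intro f
    have h := hΦ (Matrix.of fun i j => ρ (f, i) (f, j))
    simpa [Matrix.trace, Matrix.diag] using h
  rw [Matrix.trace, Matrix.trace]
  simp only [Matrix.diag, tensorExt, of_apply, Fintype.sum_prod_type]
  exact Finset.sum_congr rfl fun f _ => key f

lemma trace_submatrix_equiv' {m : Type*} [Fintype m] (e : m ≃ n) (A : Matrix n n ℂ) :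
    (A.submatrix e e).trace = A.trace := by
  rw [Matrix.trace, Matrix.trace]
  exact e.sum_comp fun i => A i i

lemma posSemidef_of_kraus {m : Type*} [Fintype m] [DecidableEq m]
    {ι : Type*} [Fintype ι] (R : ι → Matrix m n ℂ)
    {X : Matrix n n ℂ} (hX : X.PosSemidef) :
    (∑ i, R i * X * (R i)ᴴ).PosSemidef :=
  posSemidef_sum _ _ fun i _ => hX.mul_mul_conjTranspose_same (R i)

lemma sum_kron {ι : Type*} (s : Finset ι) (A : ι → Matrix n n ℂ)
    (C : Matrix (ZMod D) (ZMod D) ℂ) :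
    (∑ i ∈ s, A i) ⊗ₖ C = ∑ i ∈ s, A i ⊗ₖ C := by
  ext ⟨a, x⟩ ⟨b, y⟩
  simp [kroneckerMap_apply, Matrix.sum_apply, Finset.sum_mul]
end Specific2

section Main
set_option linter.unusedSectionVars false
variable {D E : ℕ} [NeZero D]

lemma measProj_conjTranspose (x : ZMod D) : (measProj E x)ᴴ = measProj E x := by
  rw [measProj, kron_conjTranspose, conjTranspose_one, ketbra_conjTranspose]

lemma measProj_mul (x y : ZMod D) :
    measProj E x * measProj E y = if x = y then measProj E x else 0 := by
  rw [measProj, measProj, ← Matrix.mul_kronecker_mul, Matrix.one_mul, ketbra_mul]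
  by_cases h : x = y
  · simp [h, measProj]
  · simp [h]

lemma sum_measProj : ∑ x : ZMod D, measProj E x = 1 := by
  ext ⟨a, x⟩ ⟨b, y⟩
  have h := congrFun (congrFun (sum_ketbra_eq_one (D := D)) x) y
  simp only [Matrix.sum_apply] at h ⊢
  simp only [measProj, kroneckerMap_apply, ← Finset.mul_sum, h]
  simp only [Matrix.one_apply, Prod.ext_iff, ite_and, mul_ite, mul_one, mul_zero]
  by_cases h1 : a = b <;> by_cases h2 : x = y <;> simp [h1, h2]

lemma subsysMeas_trace (X : Matrix (Fin E × ZMod D) (Fin E × ZMod D) ℂ) :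
    (subsysMeas E D X).trace = X.trace := by
  rw [subsysMeas, Matrix.trace_sum]
  have key : ∀ x : ZMod D, ((measProj E x * X * measProj E x) ⊗ₖ ketbra x).trace
      = (X * measProj E x).trace := by
    intro x
    rw [Matrix.trace_kronecker, ketbra_trace, mul_one, Matrix.trace_mul_cycle,
      measProj_mul, if_pos rfl, Matrix.trace_mul_comm]
  simp only [key]
  have : ∑ x : ZMod D, (X * measProj E x).trace = (X * ∑ x : ZMod D, measProj E x).trace := by
    rw [Finset.mul_sum, Matrix.trace_sum]
  rw [this, sum_measProj, Matrix.mul_one]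

lemma subsysMeas_kraus (X : Matrix (Fin E × ZMod D) (Fin E × ZMod D) ℂ) :
    subsysMeas E D X = ∑ x : ZMod D,
      krausKet (measProj E x) x * X * (krausKet (measProj E x) x)ᴴ := by
  rw [subsysMeas]
  refine Finset.sum_congr rfl fun x _ => ?_
  rw [← kron_ketbra_kraus, measProj_conjTranspose]


end Main

/-- For any implementation `Θ(M)(ρ) = Σ_j M_j(ρ) ⊗ |j⟩⟨j|` of the subsystem
measurement `M` (with `M_j` completely positive and `Σ_j M_j` trace preserving), for any density
matrix `σ` on `C^E` and any `j`, with `σ_j = σ ⊗ |j⟩⟨j|`, the diamond norm of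
`Δ = Θ(M) − M` satisfies `‖Δ‖◇ ≥ 1 − tr M_j(σ_j) + ‖M_j(σ_j) − σ_j‖₁`. -/
theorem diamondNorm_implementation_lower_bound
    {D E : ℕ} [NeZero D]
    (Mj : ZMod D → Matrix (Fin E × ZMod D) (Fin E × ZMod D) ℂ →
      Matrix (Fin E × ZMod D) (Fin E × ZMod D) ℂ)
    (hCP : ∀ j, ∃ (K : ℕ) (L : Fin K → Matrix (Fin E × ZMod D) (Fin E × ZMod D) ℂ),
      ∀ ρ, Mj j ρ = ∑ k, L k * ρ * (L k)ᴴ)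
    (hTP : ∀ ρ : Matrix (Fin E × ZMod D) (Fin E × ZMod D) ℂ,
      (∑ j : ZMod D, Mj j ρ).trace = ρ.trace)
    (σ : Matrix (Fin E) (Fin E) ℂ) (hσ : σ.PosSemidef) (hσtr : σ.trace = 1) (j : ZMod D) :
    1 - (Mj j (σ ⊗ₖ ketbra j)).trace.re
        + traceNorm (Mj j (σ ⊗ₖ ketbra j) - σ ⊗ₖ ketbra j)
      ≤ diamondNorm
          (fun ρ => (∑ k : ZMod D, (Mj k ρ) ⊗ₖ ketbra k) - subsysMeas E D ρ) := by
  classical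
  set Θ : Matrix (Fin E × ZMod D) (Fin E × ZMod D) ℂ →
      Matrix ((Fin E × ZMod D) × ZMod D) ((Fin E × ZMod D) × ZMod D) ℂ :=
    fun ρ => ∑ k : ZMod D, (Mj k ρ) ⊗ₖ ketbra k with hΘdef
  -- Kraus family for Θ
  choose K L hL using hCP
  set R : (Σ k : ZMod D, Fin (K k)) → Matrix ((Fin E × ZMod D) × ZMod D) (Fin E × ZMod D) ℂ :=
    fun i => krausKet (L i.1 i.2) i.1 with hRdef
  have hΘkraus : ∀ X, Θ X = ∑ i, R i * X * (R i)ᴴ := by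
    intro X
    rw [hΘdef, ← Finset.univ_sigma_univ, Finset.sum_sigma]
    refine Finset.sum_congr rfl fun k _ => ?_
    rw [hL k X, sum_kron]
    exact Finset.sum_congr rfl fun l _ => kron_ketbra_kraus (L k l) X k
  have hMjPSD : ∀ k (X : Matrix (Fin E × ZMod D) (Fin E × ZMod D) ℂ), X.PosSemidef →
      (Mj k X).PosSemidef := by
    intro k X hX
    rw [hL k X]
    exact posSemidef_of_kraus (L k) hX
  have hΘtr : ∀ X, (Θ X).trace = X.trace := by
    intro X
    rw [hΘdef]
    simp only [Matrix.trace_sum, Matrix.trace_kronecker, ketbra_trace, mul_one]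
    rw [← Matrix.trace_sum]
    exact hTP X
  -- upper bound on the defining set
  have hbdd : BddAbove { x : ℝ | ∃ (F : ℕ)
      (ρ : Matrix (Fin F × (Fin E × ZMod D)) (Fin F × (Fin E × ZMod D)) ℂ),
      ρ.PosSemidef ∧ ρ.trace = 1 ∧ x = traceNorm (tensorExt F
        (fun ρ => (∑ k : ZMod D, (Mj k ρ) ⊗ₖ ketbra k) - subsysMeas E D ρ) ρ) } := by
    refine ⟨2, ?_⟩
    rintro x ⟨F, ρ, hρ, hρtr, rfl⟩
    have hsplit : tensorExt F
        (fun ρ => (∑ k : ZMod D, (Mj k ρ) ⊗ₖ ketbra k) - subsysMeas E D ρ) ρ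
        = tensorExt F Θ ρ - tensorExt F (subsysMeas E D) ρ := by
      ext ⟨f, p⟩ ⟨g, q⟩
      simp [tensorExt, Matrix.sub_apply, hΘdef]
    have hP : (tensorExt F Θ ρ).PosSemidef := by
      rw [tensorExt_kraus R Θ hΘkraus ρ]
      exact posSemidef_of_kraus _ hρ
    have hQ : (tensorExt F (subsysMeas E D) ρ).PosSemidef := by
      rw [tensorExt_kraus _ (subsysMeas E D) subsysMeas_kraus ρ]
      exact posSemidef_of_kraus _ hρ
    have htrP : (tensorExt F Θ ρ).trace = 1 := by rw [trace_tensorExt Θ hΘtr ρ, hρtr]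
    have htrQ : (tensorExt F (subsysMeas E D) ρ).trace = 1 := by
      rw [trace_tensorExt (subsysMeas E D) subsysMeas_trace ρ, hρtr]
    calc traceNorm _ ≤ (tensorExt F Θ ρ).trace.re
          + (tensorExt F (subsysMeas E D) ρ).trace.re := by
          rw [hsplit]; exact traceNorm_sub_le hP hQ
      _ = 2 := by rw [htrP, htrQ]; norm_num
  -- the witness state
  set ρ' : Matrix (Fin E × ZMod D) (Fin E × ZMod D) ℂ := σ ⊗ₖ ketbra j with hρ'def
  have hρ'psd : ρ'.PosSemidef := kron_ketbra_posSemidef hσ j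
  have hρ'tr : ρ'.trace = 1 := by
    rw [hρ'def, Matrix.trace_kronecker, ketbra_trace, hσtr, mul_one]
  set e : Fin 1 × (Fin E × ZMod D) ≃ (Fin E × ZMod D) :=
    Equiv.uniqueProd (Fin E × ZMod D) (Fin 1) with hedef
  set e' : Fin 1 × ((Fin E × ZMod D) × ZMod D) ≃ ((Fin E × ZMod D) × ZMod D) :=
    Equiv.uniqueProd ((Fin E × ZMod D) × ZMod D) (Fin 1) with he'def
  set ρ₀ := ρ'.submatrix e e with hρ₀def
  have hρ₀psd : ρ₀.PosSemidef := hρ'psd.submatrix e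
  have hρ₀tr : ρ₀.trace = 1 := by rw [hρ₀def, trace_submatrix_equiv' e ρ', hρ'tr]
  -- computation of Δ at the witness
  have hM : subsysMeas E D ρ' = ρ' ⊗ₖ ketbra j := by
    rw [subsysMeas, Finset.sum_eq_single j]
    · rw [hρ'def, measProj, ← Matrix.mul_kronecker_mul, ← Matrix.mul_kronecker_mul,
        Matrix.one_mul, Matrix.mul_one, ketbra_mul, if_pos rfl, ketbra_mul, if_pos rfl]
    · intro x _ hx
      rw [hρ'def, measProj, ← Matrix.mul_kronecker_mul, ← Matrix.mul_kronecker_mul,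
        Matrix.one_mul, Matrix.mul_one, ketbra_mul, if_neg hx, Matrix.zero_mul,
        Matrix.kronecker_zero, Matrix.zero_kronecker]
    · intro h; exact absurd (Finset.mem_univ j) h
  have hdelta : Θ ρ' - subsysMeas E D ρ'
      = ∑ k : ZMod D, (Mj k ρ' - if k = j then ρ' else 0) ⊗ₖ ketbra k := by
    have h1 : ρ' ⊗ₖ ketbra j = ∑ k : ZMod D, (if k = j then ρ' else 0) ⊗ₖ ketbra k := by
      rw [Finset.sum_eq_single j]
      · rw [if_pos rfl]
      · intro x _ hx; rw [if_neg hx, Matrix.zero_kronecker]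
      · intro h; exact absurd (Finset.mem_univ j) h
    rw [hM, h1, hΘdef, ← Finset.sum_sub_distrib]
    exact Finset.sum_congr rfl fun k _ => (sub_kron _ _ _).symm
  -- the element value
  have hval : traceNorm (tensorExt 1
      (fun ρ => (∑ k : ZMod D, (Mj k ρ) ⊗ₖ ketbra k) - subsysMeas E D ρ) ρ₀)
      = 1 - (Mj j ρ').trace.re + traceNorm (Mj j ρ' - ρ') := by
    have hext : tensorExt 1
        (fun ρ => (∑ k : ZMod D, (Mj k ρ) ⊗ₖ ketbra k) - subsysMeas E D ρ) ρ₀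
        = ((Θ ρ' - subsysMeas E D ρ').submatrix e' e') := by
      ext ⟨f, p⟩ ⟨g, q⟩
      have hblock : ∀ f g : Fin 1,
          (Matrix.of fun i j' => ρ₀ ((f, i) : Fin 1 × _) (g, j')) = ρ' := by
        intro f g; ext i j'
        simp [hρ₀def, Matrix.submatrix_apply, hedef]
      rw [tensorExt, Matrix.of_apply, hblock]
      simp [Matrix.sub_apply, hΘdef, Matrix.submatrix_apply, he'def]
    rw [hext, traceNorm_submatrix_equiv e', hdelta, traceNorm_block_sum]
    rw [Finset.sum_eq_sum_sdiff_singleton_add (Finset.mem_univ j)]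
    have hterm : ∀ k ∈ Finset.univ \ {j},
        traceNorm (Mj k ρ' - if k = j then ρ' else 0) = (Mj k ρ').trace.re := by
      intro k hk
      have hkj : k ≠ j := by simpa using (Finset.mem_sdiff.mp hk).2
      rw [if_neg hkj, sub_zero, traceNorm_of_posSemidef (hMjPSD k ρ' hρ'psd)]
    rw [Finset.sum_congr rfl hterm, if_pos rfl]
    have hsumtr : ∑ k : ZMod D, (Mj k ρ').trace.re = 1 := by
      rw [← Complex.re_sum, ← Matrix.trace_sum, hTP ρ', hρ'tr, Complex.one_re]
    have hsplit2 : ∑ k ∈ Finset.univ \ {j}, (Mj k ρ').trace.re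
        = 1 - (Mj j ρ').trace.re := by
      have := Finset.sum_eq_sum_sdiff_singleton_add (Finset.mem_univ j)
        (fun k => (Mj k ρ').trace.re)
      rw [this] at hsumtr
      linarith
    rw [hsplit2]
  -- conclude
  rw [diamondNorm, ← hval]
  exact le_csSup hbdd ⟨1, ρ₀, hρ₀psd, hρ₀tr, rfl⟩
end

section
/- Let ρ and σ be d×d density matrices (positive semidefinite complex matrices with trace 1) and let π be a d×d orthogonal projection matrix (π = πᴴ = π²) such that π ρ = ρ. Then 1 − tr(π σ) ≤ (1/2)‖ρ − σ‖₁ ≤ √(1 − ‖√ρ √σ‖₁²). -/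
open scoped Kronecker ComplexOrder
open Matrix

namespace FvGAux
variable {n : Type*} [Fintype n] [DecidableEq n]

noncomputable def specFun {A : Matrix n n ℂ} (hA : A.IsHermitian) (f : ℝ → ℝ) : Matrix n n ℂ :=
  (hA.eigenvectorUnitary : Matrix n n ℂ) *
    Matrix.diagonal (fun i => (f (hA.eigenvalues i) : ℂ)) *
    (star (hA.eigenvectorUnitary : Matrix n n ℂ))

variable {A : Matrix n n ℂ} (hA : A.IsHermitian)

lemma star_mul_self_eigen : (star (hA.eigenvectorUnitary : Matrix n n ℂ)) *
    (hA.eigenvectorUnitary : Matrix n n ℂ) = 1 :=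
  Matrix.mem_unitaryGroup_iff'.mp (hA.eigenvectorUnitary).2

lemma self_mul_star_eigen : (hA.eigenvectorUnitary : Matrix n n ℂ) *
    (star (hA.eigenvectorUnitary : Matrix n n ℂ)) = 1 :=
  Matrix.mem_unitaryGroup_iff.mp (hA.eigenvectorUnitary).2

lemma specFun_mul (f g : ℝ → ℝ) :
    specFun hA f * specFun hA g = specFun hA (fun x => f x * g x) := by
  unfold specFun
  set U := (hA.eigenvectorUnitary : Matrix n n ℂ) with hU
  have h2 : star U * (U * Matrix.diagonal (fun i => (g (hA.eigenvalues i) : ℂ)) * star U)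
      = Matrix.diagonal (fun i => (g (hA.eigenvalues i) : ℂ)) * star U := by
    rw [← mul_assoc, ← mul_assoc, star_mul_self_eigen hA, one_mul]
  rw [mul_assoc (U * _) (star U) _, h2, ← mul_assoc, mul_assoc U _ _,
    Matrix.diagonal_mul_diagonal]
  congr 2
  ext i
  push_cast
  rfl

lemma specFun_isHermitian (f : ℝ → ℝ) : (specFun hA f).IsHermitian := by
  unfold specFun
  rw [Matrix.star_eq_conjTranspose]
  exact Matrix.isHermitian_mul_mul_conjTranspose _
    (Matrix.isHermitian_diagonal_iff.mpr fun i => isSelfAdjoint_iff.mpr (Complex.conj_ofReal _))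

lemma specFun_posSemidef {f : ℝ → ℝ} (hf : ∀ x, 0 ≤ f x) : (specFun hA f).PosSemidef := by
  unfold specFun
  rw [Matrix.star_eq_conjTranspose]
  exact (Matrix.posSemidef_diagonal_iff.mpr fun i =>
    Complex.zero_le_real.mpr (hf _)).mul_mul_conjTranspose_same _

lemma trace_specFun (f : ℝ → ℝ) :
    (specFun hA f).trace = ((∑ i, f (hA.eigenvalues i) : ℝ) : ℂ) := by
  unfold specFun
  rw [Matrix.trace_mul_cycle, star_mul_self_eigen hA, one_mul, Matrix.trace_diagonal]
  push_cast
  rfl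

lemma specFun_id : specFun hA (fun x => x) = A := by
  rw [specFun]
  exact hA.spectral_theorem.symm

lemma specFun_sub (f g : ℝ → ℝ) :
    specFun hA f - specFun hA g = specFun hA (fun x => f x - g x) := by
  unfold specFun
  rw [← Matrix.sub_mul, ← Matrix.mul_sub, Matrix.diagonal_sub]
  push_cast
  rfl

lemma specFun_one : specFun hA (fun _ => 1) = 1 := by
  unfold specFun
  simp [Matrix.diagonal_one, self_mul_star_eigen hA]


variable {n : Type*} [Fintype n] [DecidableEq n]

lemma psd_trace_re_nonneg {A : Matrix n n ℂ} (h : A.PosSemidef) : 0 ≤ A.trace.re := by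
  have hd : ∀ i, 0 ≤ (A i i).re := by
    intro i
    have h2 := h.dotProduct_mulVec_nonneg (Pi.single i 1)
    have h3 : star (Pi.single i 1 : n → ℂ) ⬝ᵥ (A *ᵥ Pi.single i 1) = A i i := by
      simp [dotProduct, Matrix.mulVec, Pi.single_apply, Finset.sum_ite_eq,
        apply_ite]
    rw [h3] at h2
    simpa using (Complex.le_def.mp h2).1
  rw [Matrix.trace, Complex.re_sum]
  exact Finset.sum_nonneg fun i _ => hd i

noncomputable def frob (B : Matrix n n ℂ) : ℝ := ∑ i, ∑ k, Complex.normSq (B i k)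

lemma frob_nonneg (B : Matrix n n ℂ) : 0 ≤ frob B :=
  Finset.sum_nonneg fun i _ => Finset.sum_nonneg fun k _ => Complex.normSq_nonneg _

lemma trace_mul_conjTranspose_re (B : Matrix n n ℂ) : (B * Bᴴ).trace.re = frob B := by
  rw [Matrix.trace, Complex.re_sum, frob]
  refine Finset.sum_congr rfl fun i _ => ?_
  rw [Matrix.diag_apply, Matrix.mul_apply, Complex.re_sum]
  refine Finset.sum_congr rfl fun k _ => ?_
  rw [Matrix.conjTranspose_apply, Complex.star_def, Complex.mul_conj]
  simp

lemma cauchy_schwarz_trace (B H : Matrix n n ℂ) :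
    (B * Hᴴ).trace.re ≤ Real.sqrt (frob B) * Real.sqrt (frob H) := by
  have h1 : (B * Hᴴ).trace.re ≤ ∑ i, ∑ k, ‖B i k‖ * ‖H i k‖ := by
    refine le_trans (Complex.re_le_norm _) ?_
    rw [Matrix.trace]
    refine le_trans (norm_sum_le _ _) (Finset.sum_le_sum fun i _ => ?_)
    rw [Matrix.diag_apply, Matrix.mul_apply]
    refine le_trans (norm_sum_le _ _) (Finset.sum_le_sum fun k _ => ?_)
    rw [norm_mul, Matrix.conjTranspose_apply, Complex.star_def, Complex.norm_conj]
  refine le_trans h1 ?_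
  have h2 : (∑ i, ∑ k, ‖B i k‖ * ‖H i k‖) ^ 2 ≤
      (∑ i, ∑ k, ‖B i k‖ ^ 2) * (∑ i, ∑ k, ‖H i k‖ ^ 2) := by
    rw [← Finset.sum_product', ← Finset.sum_product', ← Finset.sum_product']
    exact Finset.sum_mul_sq_le_sq_mul_sq _ _ _
  have h3 : (0:ℝ) ≤ ∑ i, ∑ k, ‖B i k‖ * ‖H i k‖ :=
    Finset.sum_nonneg fun i _ => Finset.sum_nonneg fun k _ =>
      mul_nonneg (norm_nonneg _) (norm_nonneg _)
  have h4 : frob B = ∑ i, ∑ k, ‖B i k‖ ^ 2 := by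
    simp [frob, Complex.sq_norm]
  have h5 : frob H = ∑ i, ∑ k, ‖H i k‖ ^ 2 := by
    simp [frob, Complex.sq_norm]
  rw [h4, h5, ← Real.sqrt_mul (Finset.sum_nonneg fun i _ => Finset.sum_nonneg fun k _ => sq_nonneg _)]
  calc (∑ i, ∑ k, ‖B i k‖ * ‖H i k‖)
      = Real.sqrt ((∑ i, ∑ k, ‖B i k‖ * ‖H i k‖) ^ 2) :=
        (Real.sqrt_sq h3).symm
    _ ≤ _ := Real.sqrt_le_sqrt h2


lemma psdSqrt_of_posSemidef {A : Matrix n n ℂ} (h : A.PosSemidef) :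
    psdSqrt A = specFun h.1 Real.sqrt := by
  rw [psdSqrt, dif_pos h]
  rfl

open scoped MatrixOrder in
lemma psdSqrt_eq_of_sq {B C : Matrix n n ℂ} (hB : B.PosSemidef) (hC : C.PosSemidef)
    (h : B * B = C) : psdSqrt C = B := by
  rw [psdSqrt_of_posSemidef hC]
  have h1 : CFC.sqrt C = B := CFC.sqrt_unique h hB.nonneg
  rw [← h1, CFC.sqrt_eq_cfc, cfc_nnreal_eq_real _ C hC.nonneg, hC.1.cfc_eq, IsHermitian.cfc,
    Unitary.conjStarAlgAut_apply]
  unfold specFun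
  congr 2
  ext i j
  simp only [Matrix.diagonal_apply]
  split_ifs <;> simp [max_eq_left (hC.eigenvalues_nonneg i)]

lemma traceNorm_hermitian {A : Matrix n n ℂ} (hA : A.IsHermitian) :
    traceNorm A = ∑ i, |hA.eigenvalues i| := by
  have h1 : A * Aᴴ = specFun hA (fun x => |x| * |x|) := by
    calc A * Aᴴ = A * A := by rw [hA.eq]
    _ = specFun hA (fun x => x) * specFun hA (fun x => x) := by rw [specFun_id]
    _ = specFun hA (fun x => x * x) := specFun_mul hA _ _
    _ = specFun hA (fun x => |x| * |x|) := by
          rw [show (fun x : ℝ => x * x) = (fun x => |x| * |x|) from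
            funext fun x => (abs_mul_abs_self x).symm]
  have h2 : psdSqrt (A * Aᴴ) = specFun hA (fun x => |x|) := by
    refine psdSqrt_eq_of_sq (specFun_posSemidef hA fun x => abs_nonneg x)
      (Matrix.posSemidef_self_mul_conjTranspose A) ?_
    rw [specFun_mul]
    exact h1.symm
  rw [traceNorm, h2, trace_specFun]
  simp

lemma traceNorm_nonneg (M : Matrix n n ℂ) : 0 ≤ traceNorm M := by
  rw [traceNorm, psdSqrt_of_posSemidef (Matrix.posSemidef_self_mul_conjTranspose M)]
  exact psd_trace_re_nonneg (specFun_posSemidef _ fun x => Real.sqrt_nonneg x)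

lemma specFun_congr {A : Matrix n n ℂ} (hA : A.IsHermitian) {f g : ℝ → ℝ}
    (h : ∀ i, f (hA.eigenvalues i) = g (hA.eigenvalues i)) : specFun hA f = specFun hA g := by
  have h2 : (fun i => (f (hA.eigenvalues i) : ℂ)) = (fun i => (g (hA.eigenvalues i) : ℂ)) :=
    funext fun i => by rw [h i]
  rw [specFun, specFun, h2]

lemma psdSqrt_mul_self' {A : Matrix n n ℂ} (h : A.PosSemidef) :
    specFun h.1 Real.sqrt * specFun h.1 Real.sqrt = A := by
  rw [specFun_mul, specFun_congr h.1 (f := fun x => Real.sqrt x * Real.sqrt x) (g := fun x => x)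
    fun i => Real.mul_self_sqrt (h.eigenvalues_nonneg i)]
  exact specFun_id h.1

lemma exists_polar_unitary (M : Matrix n n ℂ) :
    ∃ U : Matrix n n ℂ, U * Uᴴ = 1 ∧ Uᴴ * U = 1 ∧
      (M * U).trace = ((traceNorm M : ℝ) : ℂ) := by
  have hMM : (M * Mᴴ).PosSemidef := Matrix.posSemidef_self_mul_conjTranspose M
  have hH : (M * Mᴴ).IsHermitian := hMM.1
  set V : Matrix n n ℂ := (hH.eigenvectorUnitary : Matrix n n ℂ) with hVdef
  set d : n → ℝ := hH.eigenvalues with hddef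
  have hdnn : ∀ i, 0 ≤ d i := hMM.eigenvalues_nonneg
  set W : Matrix n n ℂ := star V * M with hWdef
  have hWW : W * Wᴴ = Matrix.diagonal (fun i => (d i : ℂ)) := by
    have h1 : Wᴴ = Mᴴ * V := by
      rw [hWdef, Matrix.conjTranspose_mul, Matrix.star_eq_conjTranspose,
        Matrix.conjTranspose_conjTranspose]
    rw [hWdef, h1, mul_assoc, ← mul_assoc M Mᴴ V, ← mul_assoc]
    have := hH.conjStarAlgAut_star_eigenvectorUnitary
    simp only [Unitary.conjStarAlgAut_apply, Unitary.coe_star, star_star] at this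
    exact this
  have hWWentry : ∀ i j, (∑ k, W i k * star (W j k)) = if j = i then (d i : ℂ) else 0 := by
    intro i j
    have h2 : (W * Wᴴ) i j = Matrix.diagonal (fun i => (d i : ℂ)) i j := by rw [hWW]
    rw [Matrix.mul_apply] at h2
    simp only [Matrix.conjTranspose_apply, Matrix.diagonal_apply] at h2
    rw [h2]
    by_cases h : i = j
    · subst h; simp
    · simp [h, Ne.symm h]
  have hrow0 : ∀ i, d i = 0 → ∀ k, W i k = 0 := by
    intro i hi k
    have h2 := hWWentry i i
    simp only [if_pos rfl, hi, Complex.ofReal_zero] at h2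
    have h3 : ∀ k, W i k * star (W i k) = (Complex.normSq (W i k) : ℂ) := by
      intro k
      rw [Complex.star_def, Complex.mul_conj]
    rw [Finset.sum_congr rfl fun k _ => h3 k] at h2
    have h4 : (∑ k, Complex.normSq (W i k)) = 0 := by
      have := congrArg Complex.re h2
      simpa [Complex.re_sum] using this
    have h5 := (Finset.sum_eq_zero_iff_of_nonneg
      (fun k _ => Complex.normSq_nonneg (W i k))).mp h4 k (Finset.mem_univ k)
    exact Complex.normSq_eq_zero.mp h5
  -- the normalized rows of `W` form an orthonormal family
  set v : n → EuclideanSpace ℂ n :=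
    fun i => WithLp.toLp 2 (fun k => ((Real.sqrt (d i) : ℂ))⁻¹ * W i k) with hvdef
  have hortho : Orthonormal ℂ (Set.restrict {i | d i ≠ 0} v) := by
    rw [orthonormal_iff_ite]
    rintro ⟨i, hi⟩ ⟨j, hj⟩
    change (inner ℂ (v i) (v j) : ℂ) = _
    have hinner : (inner ℂ (v i) (v j) : ℂ) =
        (starRingEnd ℂ) ((Real.sqrt (d i) : ℂ))⁻¹ * (((Real.sqrt (d j) : ℂ))⁻¹ *
          ∑ k, W j k * star (W i k)) := by
      rw [PiLp.inner_apply, Finset.mul_sum, Finset.mul_sum]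
      refine Finset.sum_congr rfl fun k _ => ?_
      simp only [hvdef, RCLike.inner_apply, _root_.map_mul, Complex.star_def]
      ring
    rw [hinner, hWWentry j i]
    rcases eq_or_ne i j with h | h
    · subst h
      rw [if_pos rfl, if_pos rfl]
      have hdne : d i ≠ 0 := hi
      have r : (Real.sqrt (d i))⁻¹ * ((Real.sqrt (d i))⁻¹ * d i) = 1 := by
        rw [← mul_assoc, ← mul_inv, Real.mul_self_sqrt (hdnn i)]
        exact inv_mul_cancel₀ hdne
      rw [← Complex.ofReal_inv, Complex.conj_ofReal, ← Complex.ofReal_mul,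
        ← Complex.ofReal_mul, r, Complex.ofReal_one]
    · rw [if_neg h, mul_zero, mul_zero, if_neg (by simpa [Subtype.ext_iff] using h)]
  obtain ⟨b, hb⟩ := hortho.exists_orthonormalBasis_extension_of_card_eq
    (finrank_euclideanSpace (𝕜 := ℂ) (ι := n))
  set B : Matrix n n ℂ := Matrix.of (fun i k => b i k) with hBdef
  have hBB : B * Bᴴ = 1 := by
    ext i j
    rw [Matrix.mul_apply, Matrix.one_apply]
    have hib := orthonormal_iff_ite.mp b.orthonormal j i
    rw [PiLp.inner_apply] at hib
    simp only [RCLike.inner_apply] at hib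
    calc ∑ k, B i k * Bᴴ k j = ∑ k, (starRingEnd ℂ) (b j k) * b i k := by
          refine Finset.sum_congr rfl fun k _ => ?_
          simp only [hBdef, Matrix.conjTranspose_apply, Matrix.of_apply, Complex.star_def]
          ring
      _ = if j = i then 1 else 0 := by
            rw [← hib]; exact Finset.sum_congr rfl fun k _ => mul_comm _ _
      _ = if i = j then 1 else 0 := by rcases eq_or_ne i j with h | h <;> simp [h, Ne.symm]
  have hBB' : Bᴴ * B = 1 := mul_eq_one_comm.mp hBB
  have hWB : W = Matrix.diagonal (fun i => (Real.sqrt (d i) : ℂ)) * B := by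
    ext i k
    rw [Matrix.diagonal_mul]
    by_cases hi : d i = 0
    · rw [hrow0 i hi k, hi]
      simp
    · have hbv : b i = v i := hb i hi
      have : B i k = ((Real.sqrt (d i) : ℂ))⁻¹ * W i k := by
        rw [hBdef, Matrix.of_apply, hbv, hvdef]
      rw [this, ← mul_assoc, mul_inv_cancel₀, one_mul]
      simp only [ne_eq, Complex.ofReal_eq_zero]
      exact Real.sqrt_ne_zero'.mpr (lt_of_le_of_ne (hdnn i) (Ne.symm hi)) 
  have hMVW : M = V * W := by
    rw [hWdef, ← mul_assoc, self_mul_star_eigen hH, one_mul]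
  refine ⟨Bᴴ * star V, ?_, ?_, ?_⟩
  · have h1 : (Bᴴ * star V)ᴴ = V * B := by
      rw [Matrix.conjTranspose_mul, Matrix.conjTranspose_conjTranspose,
        Matrix.star_eq_conjTranspose, Matrix.conjTranspose_conjTranspose]
    rw [h1, mul_assoc, ← mul_assoc (star V) V B, star_mul_self_eigen hH, one_mul, hBB']
  · have h1 : (Bᴴ * star V)ᴴ = V * B := by
      rw [Matrix.conjTranspose_mul, Matrix.conjTranspose_conjTranspose,
        Matrix.star_eq_conjTranspose, Matrix.conjTranspose_conjTranspose]
    rw [h1, mul_assoc, ← mul_assoc B Bᴴ (star V), hBB, one_mul, self_mul_star_eigen hH]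
  · have hS : M * (Bᴴ * star V) = specFun hH Real.sqrt := by
      conv_lhs => rw [hMVW, hWB, ← mul_assoc V _ B]
      rw [specFun, mul_assoc (V * _) B (Bᴴ * star V), ← mul_assoc B Bᴴ (star V), hBB,
        one_mul]
    have hTN : traceNorm M = ∑ i, Real.sqrt (d i) := by
      have hsq : specFun hH Real.sqrt * specFun hH Real.sqrt = M * Mᴴ := by
        rw [specFun_mul]
        rw [specFun_congr hH (f := fun x => Real.sqrt x * Real.sqrt x) (g := fun x => x)
          fun i => Real.mul_self_sqrt (hMM.eigenvalues_nonneg i)]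
        exact specFun_id hH
      have h2 : psdSqrt (M * Mᴴ) = specFun hH Real.sqrt :=
        psdSqrt_eq_of_sq (specFun_posSemidef hH fun x => Real.sqrt_nonneg x) hMM hsq
      rw [traceNorm, h2, trace_specFun]
      simp
      rfl
    rw [hS, trace_specFun, hTN]

lemma trace_psd_mul_self_re_nonneg {Q G : Matrix n n ℂ} (hQ : Q.PosSemidef) :
    0 ≤ (Q * (G * Gᴴ)).trace.re := by
  have h1 : Q * (G * Gᴴ) = (Q * G) * Gᴴ := by rw [mul_assoc]
  rw [h1, Matrix.trace_mul_comm, ← Matrix.mul_assoc]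
  exact psd_trace_re_nonneg (hQ.conjTranspose_mul_mul_same G)

lemma sign_mul_self (x : ℝ) : Real.sign x * x = |x| := by
  rcases lt_trichotomy x 0 with h | h | h
  · rw [Real.sign_of_neg h, abs_of_neg h]; ring
  · simp [h]
  · rw [Real.sign_of_pos h, abs_of_pos h, one_mul]

lemma one_sub_sign_sq_nonneg (x : ℝ) : 0 ≤ 1 - Real.sign x * Real.sign x := by
  rcases lt_trichotomy x 0 with h | h | h
  · rw [Real.sign_of_neg h]; norm_num
  · simp [h]
  · rw [Real.sign_of_pos h]; norm_num

end FvGAux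

open FvGAux in
set_option maxHeartbeats 1000000 in
/-- (Improved Fuchs–van de Graaf inequality.) For density matrices `ρ, σ` and
any orthogonal projection `π` with `π ρ = ρ`,
`1 − tr(π σ) ≤ (1/2)‖ρ − σ‖₁ ≤ √(1 − ‖√ρ √σ‖₁²)`. -/
theorem fuchs_van_de_graaf_improved {d : ℕ} (ρ σ π : Matrix (Fin d) (Fin d) ℂ)
    (hρ : ρ.PosSemidef) (hρtr : ρ.trace = 1)
    (hσ : σ.PosSemidef) (hσtr : σ.trace = 1)
    (hπH : πᴴ = π) (hπproj : π * π = π) (hπρ : π * ρ = ρ) :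
    1 - (π * σ).trace.re ≤ (1 / 2 : ℝ) * traceNorm (ρ - σ)
      ∧ (1 / 2 : ℝ) * traceNorm (ρ - σ)
        ≤ Real.sqrt (1 - traceNorm (psdSqrt ρ * psdSqrt σ) ^ 2) := by
  have hA : (ρ - σ).IsHermitian := hρ.1.sub hσ.1
  set lam : Fin d → ℝ := hA.eigenvalues with hlam
  have h_tn : traceNorm (ρ - σ) = ∑ i, |lam i| := traceNorm_hermitian hA
  have h_sum : ∑ i, lam i = 0 := by
    have h1 := trace_specFun hA (fun x => x)
    rw [specFun_id hA] at h1
    have h2 : (ρ - σ).trace = 0 := by rw [Matrix.trace_sub, hρtr, hσtr, sub_self]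
    rw [h2] at h1
    exact_mod_cast h1.symm
  constructor
  · -- part (a)
    set P : Matrix (Fin d) (Fin d) ℂ := specFun hA (fun x => max x 0) with hP
    set N : Matrix (Fin d) (Fin d) ℂ := specFun hA (fun x => max (-x) 0) with hN
    have hPN : P - N = ρ - σ := by
      rw [hP, hN, specFun_sub,
        show (fun x : ℝ => max x 0 - max (-x) 0) = fun x : ℝ => x from funext fun x => by
          rcases le_total 0 x with h | h
          · rw [max_eq_left h, max_eq_right (neg_nonpos.mpr h), sub_zero]
          · rw [max_eq_right h, max_eq_left (neg_nonneg.mpr h), zero_sub, neg_neg]]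
      exact specFun_id hA
    have htrP : P.trace.re = ∑ i, max (lam i) 0 := by rw [hP, trace_specFun]; simp; rfl
    have hhalf : ∑ i, max (lam i) 0 = (1/2 : ℝ) * traceNorm (ρ - σ) := by
      have hab1 : (∑ i, max (lam i) 0) + (∑ i, max (-(lam i)) 0) = ∑ i, |lam i| := by
        rw [← Finset.sum_add_distrib]
        refine Finset.sum_congr rfl fun i _ => ?_
        rcases le_total 0 (lam i) with h | h
        · rw [max_eq_left h, max_eq_right (neg_nonpos.mpr h), add_zero, abs_of_nonneg h]
        · rw [max_eq_right h, max_eq_left (neg_nonneg.mpr h), zero_add, abs_of_nonpos h]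
      have hab2 : (∑ i, max (lam i) 0) - (∑ i, max (-(lam i)) 0) = 0 := by
        rw [← Finset.sum_sub_distrib]
        rw [show ∀ (f : Fin d → ℝ), (∑ i, f i) = (∑ i, f i) from fun _ => rfl]
        rw [Finset.sum_congr rfl (fun i _ => show max (lam i) 0 - max (-(lam i)) 0 = lam i by
          rcases le_total 0 (lam i) with h | h
          · rw [max_eq_left h, max_eq_right (neg_nonpos.mpr h), sub_zero]
          · rw [max_eq_right h, max_eq_left (neg_nonneg.mpr h), zero_sub, neg_neg])]
        exact h_sum
      rw [h_tn]
      linarith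
    have hπpsd : π.PosSemidef := by
      have h1 : πᴴ * π = π := by rw [hπH, hπproj]
      exact h1 ▸ Matrix.posSemidef_conjTranspose_mul_self π
    have h1πpsd : ((1 : Matrix (Fin d) (Fin d) ℂ) - π).PosSemidef := by
      have h1 : ((1 : Matrix (Fin d) (Fin d) ℂ) - π)ᴴ * (1 - π) = 1 - π := by
        rw [Matrix.conjTranspose_sub, Matrix.conjTranspose_one, hπH, mul_sub, sub_mul,
          sub_mul, hπproj]
        noncomm_ring
      exact h1 ▸ Matrix.posSemidef_conjTranspose_mul_self _
    -- P and N as squares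
    have hPsq : P = specFun hA (fun x => Real.sqrt (max x 0)) *
        (specFun hA (fun x => Real.sqrt (max x 0)))ᴴ := by
      rw [(specFun_isHermitian hA _).eq, specFun_mul, hP,
        show (fun x : ℝ => Real.sqrt (max x 0) * Real.sqrt (max x 0)) = fun x => max x 0 from
          funext fun x => Real.mul_self_sqrt (le_max_right x 0)]
    have hNsq : N = specFun hA (fun x => Real.sqrt (max (-x) 0)) *
        (specFun hA (fun x => Real.sqrt (max (-x) 0)))ᴴ := by
      rw [(specFun_isHermitian hA _).eq, specFun_mul, hN,
        show (fun x : ℝ => Real.sqrt (max (-x) 0) * Real.sqrt (max (-x) 0)) =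
            fun x => max (-x) 0 from
          funext fun x => Real.mul_self_sqrt (le_max_right _ 0)]
    have hπP : (π * P).trace.re ≤ P.trace.re := by
      have h2 : 0 ≤ ((1 - π) * P).trace.re := by
        rw [hPsq]
        exact trace_psd_mul_self_re_nonneg h1πpsd
      have h3 : ((1 - π) * P).trace = P.trace - (π * P).trace := by
        rw [sub_mul, one_mul, Matrix.trace_sub]
      rw [h3, Complex.sub_re] at h2
      linarith
    have hπN : 0 ≤ (π * N).trace.re := by
      rw [hNsq]
      exact trace_psd_mul_self_re_nonneg hπpsd
    have hπA : (π * (ρ - σ)).trace.re = 1 - (π * σ).trace.re := by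
      rw [mul_sub, Matrix.trace_sub, hπρ, hρtr, Complex.sub_re, Complex.one_re]
    have hsplit : (π * (ρ - σ)).trace.re = (π * P).trace.re - (π * N).trace.re := by
      rw [← hPN, mul_sub, Matrix.trace_sub, Complex.sub_re]
    calc 1 - (π * σ).trace.re = (π * P).trace.re - (π * N).trace.re := by
          rw [← hπA, hsplit]
      _ ≤ (π * P).trace.re := by linarith
      _ ≤ P.trace.re := hπP
      _ = (1/2 : ℝ) * traceNorm (ρ - σ) := by rw [htrP, hhalf]
  · -- part (b)
    set X : Matrix (Fin d) (Fin d) ℂ := psdSqrt ρ with hXdef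
    set Z : Matrix (Fin d) (Fin d) ℂ := psdSqrt σ with hZdef
    have hXpsd : X.PosSemidef := by
      rw [hXdef, psdSqrt_of_posSemidef hρ]; exact specFun_posSemidef _ fun x => Real.sqrt_nonneg x
    have hZpsd : Z.PosSemidef := by
      rw [hZdef, psdSqrt_of_posSemidef hσ]; exact specFun_posSemidef _ fun x => Real.sqrt_nonneg x
    have hXX : X * X = ρ := by
      rw [hXdef, psdSqrt_of_posSemidef hρ]; exact psdSqrt_mul_self' hρ
    have hXXH : X * Xᴴ = ρ := by rw [hXpsd.1.eq]; exact hXX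
    have hZZ : Z * Z = σ := by
      rw [hZdef, psdSqrt_of_posSemidef hσ]; exact psdSqrt_mul_self' hσ
    set t : ℝ := traceNorm (X * Z) with htdef
    obtain ⟨U, hU1, hU2, hUtr⟩ := exists_polar_unitary (X * Z)
    set Y : Matrix (Fin d) (Fin d) ℂ := Z * U with hYdef
    have hYconj : Yᴴ = Uᴴ * Z := by rw [hYdef, Matrix.conjTranspose_mul, hZpsd.1.eq]
    have hYY : Y * Yᴴ = σ := by
      rw [hYdef, hYconj, mul_assoc, ← mul_assoc U Uᴴ Z, hU1, one_mul, hZZ]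
    have hYX : (Y * Xᴴ).trace = ((t : ℝ) : ℂ) := by
      rw [hYdef, hXpsd.1.eq, Matrix.trace_mul_comm, ← mul_assoc]
      exact hUtr
    have hXY : (X * Yᴴ).trace = ((t : ℝ) : ℂ) := by
      have h1 : (Y * Xᴴ)ᴴ = X * Yᴴ := by
        rw [Matrix.conjTranspose_mul, Matrix.conjTranspose_conjTranspose]
      rw [← h1, Matrix.trace_conjTranspose, hYX]
      simp
    set C : Matrix (Fin d) (Fin d) ℂ := specFun hA Real.sign with hC
    have hCherm : C.IsHermitian := specFun_isHermitian hA _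
    set G : Matrix (Fin d) (Fin d) ℂ := X - Y with hG
    set H : Matrix (Fin d) (Fin d) ℂ := X + Y with hH2
    have hGconj : Gᴴ = Xᴴ - Yᴴ := Matrix.conjTranspose_sub X Y
    have hHconj : Hᴴ = Xᴴ + Yᴴ := Matrix.conjTranspose_add X Y
    have hsumGH : G * Hᴴ + H * Gᴴ = (ρ - σ) + (ρ - σ) := by
      have e1 : G * Hᴴ + H * Gᴴ = X * Xᴴ + X * Xᴴ - (Y * Yᴴ + Y * Yᴴ) := by
        rw [hG, hH2, hGconj, hHconj]
        noncomm_ring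
      rw [e1, hYY, hXpsd.1.eq, hXX]
      noncomm_ring
    have hCA : (C * (ρ - σ)).trace = ((traceNorm (ρ - σ) : ℝ) : ℂ) := by
      have h1 : specFun hA (fun x => |x|) = C * (ρ - σ) := by
        rw [← specFun_congr hA (f := fun x => Real.sign x * x) (g := fun x => |x|)
            (fun i => sign_mul_self (lam i)),
          ← specFun_mul hA Real.sign (fun x => x), specFun_id, ← hC]
      rw [← h1, trace_specFun, h_tn]
    have hkey : traceNorm (ρ - σ) = (C * (G * Hᴴ)).trace.re := by
      have hw : (C * (H * Gᴴ)).trace = star ((C * (G * Hᴴ)).trace) := by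
        have h1 : (C * (G * Hᴴ))ᴴ = (H * Gᴴ) * C := by
          rw [Matrix.conjTranspose_mul, Matrix.conjTranspose_mul, hCherm.eq,
            Matrix.conjTranspose_conjTranspose]
        rw [← Matrix.trace_conjTranspose, h1, Matrix.trace_mul_comm]
      have h2 : (C * (G * Hᴴ)).trace + (C * (H * Gᴴ)).trace =
          ((2 * traceNorm (ρ - σ) : ℝ) : ℂ) := by
        rw [← Matrix.trace_add, ← mul_add, hsumGH, mul_add, Matrix.trace_add, hCA]
        push_cast
        ring
      rw [hw] at h2
      have h3 := congrArg Complex.re h2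
      rw [Complex.add_re, Complex.star_def, Complex.conj_re, Complex.ofReal_re] at h3
      linarith
    have hfrobCG : frob (C * G) ≤ frob G := by
      have h1 : ((1 - C * C) : Matrix (Fin d) (Fin d) ℂ).PosSemidef := by
        have e1 : (1 : Matrix (Fin d) (Fin d) ℂ) - C * C =
            specFun hA (fun x => 1 - Real.sign x * Real.sign x) := by
          rw [hC, specFun_mul, ← specFun_one hA, specFun_sub]
        rw [e1]
        exact specFun_posSemidef hA fun x => one_sub_sign_sq_nonneg x
      have h2 : 0 ≤ ((1 - C * C) * (G * Gᴴ)).trace.re := trace_psd_mul_self_re_nonneg h1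
      have h3 : ((1 - C * C) * (G * Gᴴ)).trace = (G * Gᴴ).trace - ((C * G) * (C * G)ᴴ).trace := by
        have e2 : (C * G) * (C * G)ᴴ = C * (G * Gᴴ * C) := by
          rw [Matrix.conjTranspose_mul, hCherm.eq]
          noncomm_ring
        have e3 : ((C * G) * (C * G)ᴴ).trace = ((C * C) * (G * Gᴴ)).trace := by
          rw [e2, Matrix.trace_mul_comm, mul_assoc, Matrix.trace_mul_comm]
        rw [sub_mul, one_mul, Matrix.trace_sub, e3]
      rw [h3, Complex.sub_re] at h2
      rw [← trace_mul_conjTranspose_re, ← trace_mul_conjTranspose_re]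
      linarith
    have hfrobG : frob G = 2 - 2 * t := by
      have e1 : G * Gᴴ = X * Xᴴ + Y * Yᴴ - (X * Yᴴ + Y * Xᴴ) := by
        rw [hG, hGconj]
        noncomm_ring
      have e2 : (G * Gᴴ).trace = ((2 - 2 * t : ℝ) : ℂ) := by
        rw [e1, Matrix.trace_sub, Matrix.trace_add, Matrix.trace_add, hYY, hXXH,
          hρtr, hσtr, hXY, hYX]
        push_cast
        ring
      rw [← trace_mul_conjTranspose_re, e2, Complex.ofReal_re]
    have hfrobH : frob H = 2 + 2 * t := by
      have e1 : H * Hᴴ = X * Xᴴ + Y * Yᴴ + (X * Yᴴ + Y * Xᴴ) := by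
        rw [hH2, hHconj]
        noncomm_ring
      have e2 : (H * Hᴴ).trace = ((2 + 2 * t : ℝ) : ℂ) := by
        rw [e1, Matrix.trace_add, Matrix.trace_add, Matrix.trace_add, hYY, hXXH,
          hρtr, hσtr, hXY, hYX]
        push_cast
        ring
      rw [← trace_mul_conjTranspose_re, e2, Complex.ofReal_re]
    have ht0 : 0 ≤ t := traceNorm_nonneg _
    have ht1 : t ≤ 1 := by
      have := frob_nonneg G
      rw [hfrobG] at this
      linarith
    have hmain : traceNorm (ρ - σ) ≤ Real.sqrt (2 - 2 * t) * Real.sqrt (2 + 2 * t) := by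
      rw [hkey, show C * (G * Hᴴ) = (C * G) * Hᴴ from (mul_assoc C G Hᴴ).symm]
      refine le_trans (cauchy_schwarz_trace (C * G) H) ?_
      have h1 : Real.sqrt (frob (C * G)) ≤ Real.sqrt (frob G) := Real.sqrt_le_sqrt hfrobCG
      rw [hfrobG, hfrobH] at *
      exact mul_le_mul_of_nonneg_right h1 (Real.sqrt_nonneg _)
    have hprod : Real.sqrt (2 - 2 * t) * Real.sqrt (2 + 2 * t) =
        2 * Real.sqrt (1 - t ^ 2) := by
      rw [← Real.sqrt_mul (by linarith : (0:ℝ) ≤ 2 - 2 * t),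
        show (2 - 2*t) * (2 + 2*t) = 4 * (1 - t^2) by ring,
        Real.sqrt_mul (by norm_num : (0:ℝ) ≤ 4),
        show (4:ℝ) = 2^2 by norm_num, Real.sqrt_sq (by norm_num : (0:ℝ) ≤ 2)]
    rw [hprod] at hmain
    linarith
end
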